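/- arXiv:1911.09081 — 2 statements merged into one kernel-verified Lean document; each statement's English description precedes it below -/
import Mathlib

section
/- Let n and r be natural numbers with r ≤ n, and let P be an n × n unitary matrix over the complex numbers, written in block form P = [[P₁₁, P₁₂], [P₂₁, P₂₂]] where P₁₁ is an r × r block and P₂₂ is an (n−r) × (n−r) block. Then |det(P₁₁)|² = |det(P₂₂)|². -/
open Matrix

/-- If an `n × n` complex unitary matrix `P` is written in block form
`P = [[P₁₁, P₁₂], [P₂₁, P₂₂]]` with `P₁₁` of size `r × r` and `P₂₂` of size
`(n-r) × (n-r)`, then `|det P₁₁|² = |det P₂₂|²`. -/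
theorem abs_det_block11_eq_abs_det_block22
    (n r : ℕ) (hr : r ≤ n)
    (P₁₁ : Matrix (Fin r) (Fin r) ℂ)
    (P₁₂ : Matrix (Fin r) (Fin (n - r)) ℂ)
    (P₂₁ : Matrix (Fin (n - r)) (Fin r) ℂ)
    (P₂₂ : Matrix (Fin (n - r)) (Fin (n - r)) ℂ)
    (hP : fromBlocks P₁₁ P₁₂ P₂₁ P₂₂ ∈ Matrix.unitaryGroup (Fin r ⊕ Fin (n - r)) ℂ) :
    ‖P₁₁.det‖ ^ 2 = ‖P₂₂.det‖ ^ 2 := by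
  set P : Matrix (Fin r ⊕ Fin (n - r)) (Fin r ⊕ Fin (n - r)) ℂ :=
    fromBlocks P₁₁ P₁₂ P₂₁ P₂₂ with hPdef
  have h1 : P * Pᴴ = 1 := by
    rw [← Matrix.star_eq_conjTranspose]
    exact mem_unitaryGroup_iff.mp hP
  have hPPH : fromBlocks (P₁₁ * P₁₁ᴴ + P₁₂ * P₁₂ᴴ) (P₁₁ * P₂₁ᴴ + P₁₂ * P₂₂ᴴ)
      (P₂₁ * P₁₁ᴴ + P₂₂ * P₁₂ᴴ) (P₂₁ * P₂₁ᴴ + P₂₂ * P₂₂ᴴ) =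
      fromBlocks 1 0 0 1 := by
    rw [← fromBlocks_multiply, ← fromBlocks_conjTranspose, ← hPdef, h1, ← fromBlocks_one]
  have h11 : P₁₁ * P₁₁ᴴ + P₁₂ * P₁₂ᴴ = 1 := by
    simpa only [Matrix.toBlocks_fromBlocks₁₁] using congrArg Matrix.toBlocks₁₁ hPPH
  have h21 : P₂₁ * P₁₁ᴴ + P₂₂ * P₁₂ᴴ = 0 := by
    simpa only [Matrix.toBlocks_fromBlocks₂₁] using congrArg Matrix.toBlocks₂₁ hPPH
  have key : P * fromBlocks P₁₁ᴴ 0 P₁₂ᴴ 1 = fromBlocks 1 P₁₂ 0 P₂₂ := by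
    rw [hPdef, fromBlocks_multiply, h11, h21]
    simp
  have hdet : P.det * (Matrix.det P₁₁ᴴ) = P₂₂.det := by
    have := congrArg Matrix.det key
    simpa [det_fromBlocks_zero₁₂, det_fromBlocks_zero₂₁] using this
  have hsq : ‖P.det‖ ^ 2 = 1 := by
    have h2 : P.det * star P.det = 1 := by
      rw [← Matrix.det_conjTranspose, ← Matrix.det_mul, h1, Matrix.det_one]
    have := congrArg (‖·‖) h2
    simpa [Complex.star_def, norm_mul, Complex.norm_conj, ← sq] using this
  have h22 : ‖P₂₂.det‖ ^ 2 = ‖P.det‖ ^ 2 * ‖P₁₁.det‖ ^ 2 := by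
    rw [← hdet, norm_mul, mul_pow, Matrix.det_conjTranspose]
    simp [Complex.star_def, Complex.norm_conj]
  rw [h22, hsq, one_mul]
end

section
/- Let A be an n × n Hermitian complex matrix whose distinct eigenvalues are λ₁, …, λ_d, and suppose that λᵢ has algebraic multiplicity 1, with unit eigenvector v. For an index k ∈ {1,…,n}, let M_k denote the (n−1) × (n−1) Hermitian submatrix of A obtained by deleting row k and column k of A, with eigenvalues λ₁(M_k), …, λ_{n−1}(M_k) counted with multiplicity. Then, denoting by μⱼ the algebraic multiplicity of λⱼ in A, we have |v(k)|² · ∏_{j ≠ i} (λᵢ − λⱼ)^{μⱼ} = ∏_{j=1}^{n−1} (λᵢ − λⱼ(M_k)), where v(k) is the k-th coordinate of v. -/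
open Matrix Polynomial

lemma eval_charpoly_eq' {m : Type*} [Fintype m] [DecidableEq m]
    (M : Matrix m m ℂ) (r : ℂ) :
    M.charpoly.eval r = (r • (1 : Matrix m m ℂ) - M).det := by
  rw [Matrix.charpoly, ← Polynomial.coe_evalRingHom, RingHom.map_det]
  congr 1
  ext i j
  by_cases h : i = j <;>
    simp [Matrix.charmatrix_apply, Matrix.one_apply, h, Matrix.diagonal_apply,
      Matrix.map_apply, Matrix.sub_apply, Matrix.smul_apply]

lemma adj_unitary' {m : Type*} [Fintype m] [DecidableEq m] (U : Matrix m m ℂ)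
    (h1 : star U * U = 1) : adjugate U = det U • star U := by
  calc adjugate U = (star U * U) * adjugate U := by rw [h1, one_mul]
    _ = star U * (det U • 1) := by rw [mul_assoc, Matrix.mul_adjugate]
    _ = det U • star U := by rw [Matrix.mul_smul, mul_one]

lemma unique_root' {N d : ℕ} (f : Fin N → ℂ) (g : Fin d → ℂ) (μ : Fin d → ℕ)
    (hinj : Function.Injective g) (i : Fin d) (hμi : μ i = 1)
    (h : (∏ l, (X - C (f l))) = ∏ j, (X - C (g j)) ^ μ j) :
    ∃ l₀ : Fin N, f l₀ = g i ∧ ∀ l, f l = g i → l = l₀ := by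
  have hroots : (∏ l, (X - C (f l))).roots = (Finset.univ.val.map f) := by
    rw [Polynomial.roots_prod _ _ (by
      rw [h]
      exact Finset.prod_ne_zero_iff.2 fun j _ => pow_ne_zero _ (X_sub_C_ne_zero _))]
    simp [Polynomial.roots_X_sub_C, Multiset.bind_map]
  have hroots2 : (∏ j, (X - C (g j)) ^ μ j).roots
      = Finset.univ.val.bind (fun j => μ j • {g j}) := by
    rw [Polynomial.roots_prod _ _ (by
      exact Finset.prod_ne_zero_iff.2 fun j _ => pow_ne_zero _ (X_sub_C_ne_zero _))]
    simp [Polynomial.roots_pow, Polynomial.roots_X_sub_C]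
  have hcount : Multiset.count (g i) (Finset.univ.val.map f) = 1 := by
    rw [← hroots, h, hroots2]
    rw [Multiset.count_bind]
    have hco : ∀ j : Fin d, Multiset.count (g i) (μ j • ({g j} : Multiset ℂ))
        = if j = i then μ j else 0 := by
      intro j
      rw [Multiset.count_nsmul, Multiset.count_singleton]
      by_cases hji : j = i
      · simp [hji]
      · simp only [if_neg hji, Multiset.count_singleton]
        rw [if_neg (fun hgj => hji (hinj hgj.symm)), mul_zero]
    calc (Multiset.map (fun j => Multiset.count (g i) (μ j • ({g j} : Multiset ℂ)))
          Finset.univ.val).sum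
        = ∑ j, Multiset.count (g i) (μ j • ({g j} : Multiset ℂ)) := rfl
      _ = ∑ j, if j = i then μ j else 0 := by simp_rw [hco]
      _ = μ i := by simp
      _ = 1 := hμi
  rw [Multiset.count_map] at hcount
  have hcard : (Finset.univ.filter (fun l => g i = f l)).card = 1 := by
    rw [← hcount]
    rfl
  obtain ⟨l₀, hl₀⟩ := Finset.card_eq_one.mp hcard
  refine ⟨l₀, ?_, ?_⟩
  · have : l₀ ∈ Finset.univ.filter (fun l => g i = f l) := hl₀ ▸ Finset.mem_singleton_self l₀
    exact ((Finset.mem_filter.mp this).2).symm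
  · intro l hl
    have : l ∈ Finset.univ.filter (fun l => g i = f l) :=
      Finset.mem_filter.mpr ⟨Finset.mem_univ _, hl.symm⟩
    rw [hl₀, Finset.mem_singleton] at this
    exact this

/-- Eigenvectors from eigenvalues (Denton–Parke–Tao–Zhang).
If `lam i` is an eigenvalue of the Hermitian matrix `A` of algebraic
multiplicity `1`, with unit eigenvector `v`, and `M_k` is the principal
submatrix of `A` obtained by deleting the `k`-th row and column, with
eigenvalues `ν` (with multiplicity), then
`|v k|² ⬝ ∏_{j ≠ i} (lam i − lam j)^{μ j} = ∏_j (lam i − ν j)`. -/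
theorem abs_eigenvector_entry_sq
    (n d : ℕ) (A : Matrix (Fin n) (Fin n) ℂ)
    (hA : A.IsHermitian)
    (lam : Fin d → ℝ) (μ : Fin d → ℕ)
    (hdist : Function.Injective lam)
    (hchar : A.charpoly = ∏ j, (X - C (lam j : ℂ)) ^ μ j)
    (i : Fin d) (hμi : μ i = 1)
    (v : Fin n → ℂ)
    (hunit : star v ⬝ᵥ v = 1)
    (heig : A.mulVec v = ((lam i : ℂ)) • v)
    (k : Fin n)
    (ν : Fin (n - 1) → ℝ)
    (hMk : (A.submatrix (fun p : {x // x ∈ ({k}ᶜ : Finset (Fin n))} => (p : Fin n))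
        (fun p : {x // x ∈ ({k}ᶜ : Finset (Fin n))} => (p : Fin n))).charpoly
        = ∏ j, (X - C (ν j : ℂ))) :
    ‖v k‖ ^ 2
      * ∏ j ∈ Finset.univ.erase i, (lam i - lam j) ^ μ j
      = ∏ j, (lam i - ν j) := by
  obtain ⟨m, rfl⟩ : ∃ m, n = m + 1 :=
    ⟨n - 1, by rcases n with _ | m; exacts [k.elim0, rfl]⟩
  set U : Matrix (Fin (m + 1)) (Fin (m + 1)) ℂ := (hA.eigenvectorUnitary : Matrix (Fin (m + 1)) (Fin (m + 1)) ℂ)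
    with hUdef
  have hU1 : star U * U = 1 := by
    simpa [hUdef] using (Matrix.mem_unitaryGroup_iff'.mp hA.eigenvectorUnitary.2)
  have hU2 : U * star U = 1 := by
    simpa [hUdef] using (Matrix.mem_unitaryGroup_iff.mp hA.eigenvectorUnitary.2)
  set dgc : Fin (m + 1) → ℂ := fun l => ((hA.eigenvalues l : ℝ) : ℂ) with hdgc
  have hspec : A = U * diagonal dgc * star U := hA.spectral_theorem
  have hconj : ∀ x : ℂ, x • (1 : Matrix (Fin (m + 1)) (Fin (m + 1)) ℂ) - A
      = U * diagonal (fun l => x - dgc l) * star U := by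
    intro x
    have h1 : diagonal (fun l => x - dgc l)
        = x • (1 : Matrix (Fin (m + 1)) (Fin (m + 1)) ℂ) - diagonal dgc := by
      ext a b
      by_cases h : a = b <;>
        simp [h, Matrix.one_apply, Matrix.diagonal_apply, Matrix.sub_apply, Matrix.smul_apply]
    rw [h1, Matrix.mul_sub, Matrix.sub_mul, Matrix.mul_smul, Matrix.mul_one,
      Matrix.smul_mul, hU2, ← hspec]
  have hcharD : A.charpoly = ∏ l, (X - C (dgc l)) := by
    apply Polynomial.funext
    intro x
    rw [eval_charpoly_eq', hconj x, det_mul, det_mul, det_diagonal]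
    have hd1 : det U * det (star U) = 1 := by rw [← det_mul, hU2, det_one]
    simp only [eval_prod, eval_sub, eval_X, eval_C]
    calc (det U * ∏ l, (x - dgc l)) * det (star U)
        = (det U * det (star U)) * ∏ l, (x - dgc l) := by ring
      _ = ∏ l, (x - dgc l) := by rw [hd1, one_mul]
  have hchar' : (∏ l, (X - C (dgc l))) = ∏ j, (X - C ((lam j : ℂ))) ^ μ j := by
    rw [← hcharD, hchar]
  obtain ⟨l₀, hl₀, hl₀u⟩ := unique_root' dgc (fun j => ((lam j : ℝ) : ℂ)) μ
    (fun a b hab => hdist (Complex.ofReal_injective hab)) i hμi hchar'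
  -- cancellation
  have hfac : (∏ l ∈ Finset.univ.erase l₀, (X - C (dgc l)))
      = ∏ j ∈ Finset.univ.erase i, (X - C ((lam j : ℂ))) ^ μ j := by
    apply mul_left_cancel₀ (X_sub_C_ne_zero ((lam i : ℂ)))
    calc (X - C ((lam i : ℂ))) * ∏ l ∈ Finset.univ.erase l₀, (X - C (dgc l))
        = (X - C (dgc l₀)) * ∏ l ∈ Finset.univ.erase l₀, (X - C (dgc l)) := by rw [hl₀]
      _ = ∏ l, (X - C (dgc l)) :=
          Finset.mul_prod_erase Finset.univ (fun l => X - C (dgc l)) (Finset.mem_univ l₀)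
      _ = ∏ j, (X - C ((lam j : ℂ))) ^ μ j := hchar'
      _ = (X - C ((lam i : ℂ))) ^ μ i
            * ∏ j ∈ Finset.univ.erase i, (X - C ((lam j : ℂ))) ^ μ j :=
          (Finset.mul_prod_erase Finset.univ (fun j => (X - C ((lam j : ℂ))) ^ μ j)
            (Finset.mem_univ i)).symm
      _ = (X - C ((lam i : ℂ)))
            * ∏ j ∈ Finset.univ.erase i, (X - C ((lam j : ℂ))) ^ μ j := by
          rw [hμi, pow_one]
  have hc : (∏ l ∈ Finset.univ.erase l₀, ((lam i : ℂ) - dgc l))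
      = ∏ j ∈ Finset.univ.erase i, ((lam i : ℂ) - (lam j : ℂ)) ^ μ j := by
    have := congrArg (Polynomial.eval ((lam i : ℂ))) hfac
    simpa [eval_prod, eval_pow] using this
  -- the eigenvector in the eigenbasis
  set u : Fin (m + 1) → ℂ := star U *ᵥ v with hu
  have hDu : diagonal dgc *ᵥ u = ((lam i : ℂ)) • u := by
    have h2 : star U * A = diagonal dgc * star U := by
      rw [hspec, ← Matrix.mul_assoc, ← Matrix.mul_assoc, hU1, Matrix.one_mul]
    calc diagonal dgc *ᵥ u = (diagonal dgc * star U) *ᵥ v := by rw [hu, mulVec_mulVec]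
      _ = (star U * A) *ᵥ v := by rw [h2]
      _ = star U *ᵥ (A *ᵥ v) := (mulVec_mulVec _ _ _).symm
      _ = star U *ᵥ (((lam i : ℂ)) • v) := by rw [heig]
      _ = ((lam i : ℂ)) • u := by rw [mulVec_smul, hu]
  have hu0 : ∀ l, l ≠ l₀ → u l = 0 := by
    intro l hl
    have h3 := congrFun hDu l
    rw [mulVec_diagonal] at h3
    have hne : dgc l - (lam i : ℂ) ≠ 0 := by
      intro h0
      exact hl (hl₀u l (by linear_combination h0))
    have : (dgc l - (lam i : ℂ)) * u l = 0 := by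
      have := h3
      simp only [Pi.smul_apply, smul_eq_mul] at this
      linear_combination this
    exact (mul_eq_zero.mp this).resolve_left hne
  have hvU : v = U *ᵥ u := by
    rw [hu, mulVec_mulVec, hU2, one_mulVec]
  have hvk : v k = U k l₀ * u l₀ := by
    rw [hvU]
    show ∑ l, U k l * u l = _
    exact Finset.sum_eq_single l₀ (fun l _ hl => by rw [hu0 l hl, mul_zero])
      (fun h => absurd (Finset.mem_univ l₀) h)
  have huul : (starRingEnd ℂ) (u l₀) * u l₀ = 1 := by
    have h1 : star u ⬝ᵥ u = 1 := by
      rw [hu, star_mulVec, show (star U)ᴴ = U from star_star U, dotProduct_mulVec,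
        vecMul_vecMul, hU2, vecMul_one, hunit]
    calc (starRingEnd ℂ) (u l₀) * u l₀
        = ∑ l, (starRingEnd ℂ) (u l) * u l :=
          (Finset.sum_eq_single (f := fun l => (starRingEnd ℂ) (u l) * u l) l₀
            (fun l _ hl => by simp [hu0 l hl])
            (fun h => absurd (Finset.mem_univ l₀) h)).symm
      _ = star u ⬝ᵥ u := by simp [dotProduct, Pi.star_apply]
      _ = 1 := h1
  -- adjugate computation
  set B : Matrix (Fin (m + 1)) (Fin (m + 1)) ℂ := ((lam i : ℂ)) • 1 - A with hB
  have hadjU : adjugate U = det U • star U := adj_unitary' U hU1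
  have hadjUs : adjugate (star U) = det (star U) • U := by
    have h := adj_unitary' (star U) (by rw [star_star, hU2])
    rwa [star_star] at h
  have hdet1 : det (star U) * det U = 1 := by rw [← det_mul, hU1, det_one]
  have hadjB : adjugate B
      = U * diagonal (fun l => ∏ t ∈ Finset.univ.erase l, ((lam i : ℂ) - dgc t)) * star U := by
    rw [hB, hconj, adjugate_mul_distrib, adjugate_mul_distrib, adjugate_diagonal, hadjU,
      hadjUs, Matrix.smul_mul, Matrix.mul_smul, Matrix.mul_smul, smul_smul, hdet1, one_smul,
      Matrix.mul_assoc]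
  have hgl0 : ∀ l, l ≠ l₀ → (∏ t ∈ Finset.univ.erase l, ((lam i : ℂ) - dgc t)) = 0 := by
    intro l hl
    refine Finset.prod_eq_zero (Finset.mem_erase.mpr ⟨fun h => hl h.symm, Finset.mem_univ _⟩) ?_
    rw [hl₀, sub_self]
  have hadjBkk : adjugate B k k
      = (∏ t ∈ Finset.univ.erase l₀, ((lam i : ℂ) - dgc t))
        * (U k l₀ * star (U k l₀)) := by
    rw [hadjB, Matrix.mul_apply]
    simp only [Matrix.mul_diagonal, Matrix.star_apply]
    rw [Finset.sum_eq_single (f := fun l => U k l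
        * (∏ t ∈ Finset.univ.erase l, ((lam i : ℂ) - dgc t)) * star (U k l)) l₀
      (fun l _ hl => by simp [hgl0 l hl])
      (fun h => absurd (Finset.mem_univ l₀) h)]
    ring
  -- the principal minor
  have hcard : Fintype.card {x // x ∈ ({k}ᶜ : Finset (Fin (m + 1)))} = m := by
    simp [Fintype.card_coe]
  have hmem : ∀ j : Fin m, k.succAbove j ∈ ({k}ᶜ : Finset (Fin (m + 1))) := by
    intro j
    simp [Finset.mem_compl, Fin.succAbove_ne k j]
  have hbij : Function.Bijective
      (fun j : Fin m => (⟨k.succAbove j, hmem j⟩ : {x // x ∈ ({k}ᶜ : Finset (Fin (m + 1)))})) := by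
    rw [Fintype.bijective_iff_injective_and_card]
    exact ⟨fun a b hab => Fin.succAbove_right_injective (congrArg Subtype.val hab),
      by simp [hcard]⟩
  have hsubdet : det (B.submatrix
        (fun p : {x // x ∈ ({k}ᶜ : Finset (Fin (m + 1)))} => (p : Fin (m + 1)))
        (fun p : {x // x ∈ ({k}ᶜ : Finset (Fin (m + 1)))} => (p : Fin (m + 1))))
      = adjugate B k k := by
    rw [← Matrix.det_submatrix_equiv_self (Equiv.ofBijective _ hbij)]
    have hsb : ((B.submatrix
        (fun p : {x // x ∈ ({k}ᶜ : Finset (Fin (m + 1)))} => (p : Fin (m + 1)))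
        (fun p : {x // x ∈ ({k}ᶜ : Finset (Fin (m + 1)))} => (p : Fin (m + 1)))).submatrix
          (Equiv.ofBijective _ hbij) (Equiv.ofBijective _ hbij))
        = B.submatrix k.succAbove k.succAbove := rfl
    rw [hsb, Matrix.adjugate_fin_succ_eq_det_submatrix, ← two_mul, pow_mul, neg_one_sq,
      one_pow, one_mul]
  have hMkdet : det (B.submatrix
        (fun p : {x // x ∈ ({k}ᶜ : Finset (Fin (m + 1)))} => (p : Fin (m + 1)))
        (fun p : {x // x ∈ ({k}ᶜ : Finset (Fin (m + 1)))} => (p : Fin (m + 1))))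
      = ∏ j, ((lam i : ℂ) - (ν j : ℂ)) := by
    have h1 := congrArg (Polynomial.eval ((lam i : ℂ))) hMk
    rw [eval_charpoly_eq'] at h1
    have h2 : (lam i : ℂ) • (1 : Matrix {x // x ∈ ({k}ᶜ : Finset (Fin (m + 1)))}
          {x // x ∈ ({k}ᶜ : Finset (Fin (m + 1)))} ℂ)
        - A.submatrix (fun p : {x // x ∈ ({k}ᶜ : Finset (Fin (m + 1)))} => (p : Fin (m + 1)))
            (fun p : {x // x ∈ ({k}ᶜ : Finset (Fin (m + 1)))} => (p : Fin (m + 1)))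
        = B.submatrix
            (fun p : {x // x ∈ ({k}ᶜ : Finset (Fin (m + 1)))} => (p : Fin (m + 1)))
            (fun p : {x // x ∈ ({k}ᶜ : Finset (Fin (m + 1)))} => (p : Fin (m + 1))) := by
      ext a b
      by_cases hab : a = b
      · simp [hB, hab, Matrix.sub_apply, Matrix.smul_apply, Matrix.submatrix_apply,
          Matrix.one_apply]
      · simp only [hB, Matrix.sub_apply, Matrix.smul_apply, Matrix.submatrix_apply,
          Matrix.one_apply, if_neg hab, smul_eq_mul, mul_ite, mul_one, mul_zero, zero_sub]
        rw [if_neg (fun h => hab (Subtype.ext h)), zero_sub]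
    rw [h2] at h1
    rw [h1]
    simp [Polynomial.eval_prod]
  -- assembly
  have key : ((starRingEnd ℂ) (v k) * v k)
      * (∏ j ∈ Finset.univ.erase i, ((lam i : ℂ) - (lam j : ℂ)) ^ μ j)
      = ∏ j, ((lam i : ℂ) - (ν j : ℂ)) := by
    rw [← hc, ← hMkdet, hsubdet, hadjBkk, hvk]
    have : (starRingEnd ℂ) (U k l₀ * u l₀) * (U k l₀ * u l₀)
        = (U k l₀ * star (U k l₀)) * ((starRingEnd ℂ) (u l₀) * u l₀) := by
      simp only [_root_.map_mul, Complex.star_def]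
      ring
    rw [this, huul, mul_one]
    ring
  apply Complex.ofReal_injective
  push_cast
  have habs : ((‖v k‖ : ℂ)) ^ 2 = (starRingEnd ℂ) (v k) * v k := by
    rw [← Complex.ofReal_pow, Complex.sq_norm]
    rw [← Complex.mul_conj]
    ring
  rw [habs, ← key]
end
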